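/- If x and y are branching apart (x #_b y) in a finite LTS, then Spoiler has a winning strategy from configuration [x,y] in the branching bisimulation game. -/

import Mathlib

/-- `x ⟹ x'`: a (possibly empty) sequence of `τ`-steps from `x` to `x'`. -/
def TauStar {X A : Type} (tr : X → A → X → Prop) (τ : A) : X → X → Prop :=
  Relation.ReflTransGen (fun u v => tr u τ v)

/-- `x →(α) x'`: either `x →α x'`, or `α = τ` and `x = x'`. -/
def TrOpt {X A : Type} (tr : X → A → X → Prop) (τ : A) (x : X) (α : A) (x' : X) : Prop :=
  tr x α x' ∨ (α = τ ∧ x = x')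

/-- A symmetric relation `R` is a branching bisimulation. -/
def IsBranchingBisim {X A : Type} (tr : X → A → X → Prop) (τ : A)
    (R : X → X → Prop) : Prop :=
  Symmetric R ∧ ∀ x y, R x y → ∀ α x', tr x α x' →
    ∃ y' y'', TauStar tr τ y y' ∧ TrOpt tr τ y' α y'' ∧ R x y' ∧ R x' y''

/-- Branching bisimilarity: the union of all branching bisimulations. -/
def BranchingBisimilar {X A : Type} (tr : X → A → X → Prop) (τ : A) (x y : X) : Prop :=
  ∃ R, IsBranchingBisim tr τ R ∧ R x y

/-- A symmetric relation `R` is a branching apartness relation. -/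
def IsBranchingApartnessRel {X A : Type} (tr : X → A → X → Prop) (τ : A)
    (R : X → X → Prop) : Prop :=
  Symmetric R ∧ ∀ x y α x', tr x α x' →
    (∀ y' y'', TauStar tr τ y y' → TrOpt tr τ y' α y'' → (R x y' ∨ R x' y'')) →
    R x y

/-- Branching apartness: the intersection of all branching apartness relations. -/
def BranchingApart {X A : Type} (tr : X → A → X → Prop) (τ : A) (x y : X) : Prop :=
  ∀ R, IsBranchingApartnessRel tr τ R → R x y

/-- A step of a play that is consistent with the positional strategy `π` of the
player owning the configurations satisfying `own`. -/
def ConsStep {C : Type} (move : C → C → Prop) (own : C → Prop) (π : C → C)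
    (c c' : C) : Prop :=
  move c c' ∧ (own c → c' = π c)

/-- A positional strategy is valid if it picks an actual move whenever one exists. -/
def ValidStrat {C : Type} (move : C → C → Prop) (own : C → Prop) (π : C → C) : Prop :=
  ∀ c, own c → (∃ c', move c c') → move c (π c)

/-- `c :: l` is a maximal finite play w.r.t. the step relation `R`:
it is a chain of `R`-steps that cannot be extended. -/
def MaxFinPlay {C : Type} (R : C → C → Prop) (c : C) (l : List C) : Prop :=
  List.Chain R c l ∧ ∀ c', ¬ R ((c :: l).getLast (List.cons_ne_nil c l)) c'

/-- An infinite play from `c` consistent with the strategy. -/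
def InfPlay {C : Type} (R : C → C → Prop) (c : C) (f : ℕ → C) : Prop :=
  f 0 = c ∧ ∀ i, R (f i) (f (i + 1))

/-- The positional Spoiler strategy `π` is winning from configuration `c`:
it is valid, admits no infinite consistent play from `c` (those are won by Duplicator),
and every maximal finite consistent play from `c` ends in a (stuck) configuration
owned by Duplicator. Here `isS c` says that `c` is a Spoiler configuration. -/
def SpoilerWinsFrom {C : Type} (move : C → C → Prop) (isS : C → Prop) (π : C → C)
    (c : C) : Prop :=
  ValidStrat move isS π ∧
  (∀ f, ¬ InfPlay (ConsStep move isS π) c f) ∧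
  (∀ l, MaxFinPlay (ConsStep move isS π) c l →
      ¬ isS ((c :: l).getLast (List.cons_ne_nil c l)))

/-- The positional Duplicator strategy `ρ` is winning from configuration `c`:
it is valid and every maximal finite consistent play from `c` ends in a (stuck)
configuration owned by Spoiler; infinite plays are won by Duplicator anyway. -/
def DuplicatorWinsFrom {C : Type} (move : C → C → Prop) (isS : C → Prop) (ρ : C → C)
    (c : C) : Prop :=
  ValidStrat move (fun c => ¬ isS c) ρ ∧
  (∀ l, MaxFinPlay (ConsStep move (fun c => ¬ isS c) ρ) c l →
      isS ((c :: l).getLast (List.cons_ne_nil c l)))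

/-- The moves of an alternating two-player game with Spoiler configurations `CS`,
Duplicator configurations `CD` (the configurations are `CS ⊕ CD`), Spoiler moves
`mS` and Duplicator moves `mD`. -/
def AltMove {CS CD : Type} (mS : CS → CD → Prop) (mD : CD → CS → Prop) :
    CS ⊕ CD → CS ⊕ CD → Prop
  | Sum.inl s, Sum.inr d => mS s d
  | Sum.inr d, Sum.inl s => mD d s
  | _, _ => False

/-- Spoiler configurations of the alternating game are the left injections. -/
def AltIsS {CS CD : Type} : CS ⊕ CD → Prop := fun c => c.isLeft = true

/-- The winning region of Spoiler in the alternating game. -/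
def SpoilerRegion {CS CD : Type} (mS : CS → CD → Prop) (mD : CD → CS → Prop) :
    Set CS :=
  {s | ∃ π, SpoilerWinsFrom (AltMove mS mD) AltIsS π (Sum.inl s)}

/-- The winning region of Duplicator in the alternating game. -/
def DuplicatorRegion {CS CD : Type} (mS : CS → CD → Prop) (mD : CD → CS → Prop) :
    Set CS :=
  {s | ∃ ρ, DuplicatorWinsFrom (AltMove mS mD) AltIsS ρ (Sum.inl s)}

/-- Configurations of the branching bisimulation game: Spoiler configurations are
pairs `[x,y]` and quintuples `[x,x',y,y',y'']`; Duplicator configurations are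
tuples `⟨x,α,x',y⟩`. -/
inductive BConf (X A : Type) where
  | pair : X → X → BConf X A
  | quint : X → X → X → X → X → BConf X A
  | dup : X → A → X → X → BConf X A

/-- Spoiler owns the pair and quintuple configurations. -/
def BIsS {X A : Type} : BConf X A → Prop
  | BConf.dup _ _ _ _ => False
  | _ => True

/-- Moves of the branching bisimulation game. -/
inductive BMove {X A : Type} (tr : X → A → X → Prop) (τ : A) :
    BConf X A → BConf X A → Prop
  | s1l {x y α x'} : tr x α x' → BMove tr τ (BConf.pair x y) (BConf.dup x α x' y)
  | s1r {x y α y'} : tr y α y' → BMove tr τ (BConf.pair x y) (BConf.dup y α y' x)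
  | s2a {x x' y y' y''} : BMove tr τ (BConf.quint x x' y y' y'') (BConf.pair x y')
  | s2b {x x' y y' y''} : BMove tr τ (BConf.quint x x' y y' y'') (BConf.pair x' y'')
  | d {x α x' y y' y''} : TauStar tr τ y y' → TrOpt tr τ y' α y'' →
      BMove tr τ (BConf.dup x α x' y) (BConf.quint x x' y y' y'')

/-- The winning region of Spoiler in the branching bisimulation game, restricted to
pair configurations. -/
def BSpoilerRegion {X A : Type} (tr : X → A → X → Prop) (τ : A) : Set (X × X) :=
  {p | ∃ π, SpoilerWinsFrom (BMove tr τ) BIsS π (BConf.pair p.1 p.2)}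

namespace BApartAux

variable {X A : Type}

/-- Stratified branching apartness. -/
def ApartN (tr : X → A → X → Prop) (τ : A) : ℕ → X → X → Prop
  | 0, _, _ => False
  | n+1, x, y =>
      (∃ α x', tr x α x' ∧ ∀ y' y'', TauStar tr τ y y' → TrOpt tr τ y' α y'' →
          ApartN tr τ n x y' ∨ ApartN tr τ n x' y'') ∨
      (∃ α y₁, tr y α y₁ ∧ ∀ x₁ x₂, TauStar tr τ x x₁ → TrOpt tr τ x₁ α x₂ →
          ApartN tr τ n y x₁ ∨ ApartN tr τ n y₁ x₂)

variable (tr : X → A → X → Prop) (τ : A)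

theorem apartN_symm : ∀ n x y, ApartN tr τ n x y → ApartN tr τ n y x
  | 0, _, _, h => h.elim
  | (n+1), _, _, h => h.symm

theorem apartN_mono : ∀ n x y, ApartN tr τ n x y → ApartN tr τ (n+1) x y
  | (n+1), x, y, h => by
    rcases h with ⟨α, x', hx, H⟩ | ⟨α, y₁, hy, H⟩
    · exact Or.inl ⟨α, x', hx, fun y' y'' h1 h2 =>
        (H y' y'' h1 h2).imp (apartN_mono n x y') (apartN_mono n x' y'')⟩
    · exact Or.inr ⟨α, y₁, hy, fun x₁ x₂ h1 h2 =>
        (H x₁ x₂ h1 h2).imp (apartN_mono n y x₁) (apartN_mono n y₁ x₂)⟩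

theorem apartN_le {m n : ℕ} (h : m ≤ n) {x y : X} (ha : ApartN tr τ m x y) :
    ApartN tr τ n x y := by
  induction h with
  | refl => exact ha
  | step _ ih => exact apartN_mono tr τ _ _ _ ih

/-- Branching apartness as a union of strata. -/
def Ap (x y : X) : Prop := ∃ n, ApartN tr τ n x y

theorem ap_symm {x y : X} (h : Ap tr τ x y) : Ap tr τ y x :=
  h.imp fun n => apartN_symm tr τ n x y

theorem ap_of_branchingApart [Finite X] {x y : X}
    (h : BranchingApart tr τ x y) : Ap tr τ x y := by
  apply h
  constructor
  · exact fun a b => ap_symm tr τ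
  · intro a b α a' ha H
    classical
    haveI : Fintype X := Fintype.ofFinite X
    set f : X × X → ℕ := fun p => if hp : Ap tr τ p.1 p.2 then hp.choose else 0 with hf
    set N : ℕ := (Finset.univ : Finset (X × X)).sup f with hN
    have key : ∀ u v : X, Ap tr τ u v → ApartN tr τ N u v := by
      intro u v huv
      have h1 : ApartN tr τ (f (u, v)) u v := by
        simp only [hf]
        rw [dif_pos huv]
        exact huv.choose_spec
      exact apartN_le tr τ (Finset.le_sup (Finset.mem_univ (u, v))) h1
    refine ⟨N + 1, Or.inl ⟨α, a', ha, fun y' y'' h1 h2 => ?_⟩⟩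
    exact (H y' y'' h1 h2).imp (key a y') (key a' y'')

open Classical in
/-- Rank of an apart pair. -/
noncomputable def rk (x y : X) : ℕ :=
  if h : Ap tr τ x y then Nat.find h else 0

open Classical in
theorem rk_spec {x y : X} (h : Ap tr τ x y) : ApartN tr τ (rk tr τ x y) x y := by
  rw [rk, dif_pos h]; exact Nat.find_spec h

open Classical in
theorem rk_le {n : ℕ} {x y : X} (h : ApartN tr τ n x y) : rk tr τ x y ≤ n := by
  rw [rk, dif_pos ⟨n, h⟩]; exact Nat.find_le h

theorem rk_symm (x y : X) : rk tr τ x y = rk tr τ y x := by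
  classical
  by_cases h : Ap tr τ x y
  · have h' := ap_symm tr τ h
    exact le_antisymm (rk_le tr τ (apartN_symm tr τ _ _ _ (rk_spec tr τ h')))
      (rk_le tr τ (apartN_symm tr τ _ _ _ (rk_spec tr τ h)))
  · have h' : ¬ Ap tr τ y x := fun hc => h (ap_symm tr τ hc)
    rw [rk, rk, dif_neg h, dif_neg h']

/-- A dup-configuration that is a good Spoiler move from `[x,y]`. -/
def GoodDup (x y : X) (c : BConf X A) : Prop :=
  ∃ a α a' b, c = BConf.dup a α a' b ∧ ((a, b) = (x, y) ∨ (a, b) = (y, x)) ∧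
    tr a α a' ∧
    ∀ b' b'', TauStar tr τ b b' → TrOpt tr τ b' α b'' →
      (Ap tr τ a b' ∧ rk tr τ a b' < rk tr τ a b) ∨
      (Ap tr τ a' b'' ∧ rk tr τ a' b'' < rk tr τ a b)

theorem exists_goodDup {x y : X} (h : Ap tr τ x y) :
    ∃ c, GoodDup tr τ x y c := by
  have hs := rk_spec tr τ h
  rcases hm : rk tr τ x y with _ | k
  · rw [hm] at hs; exact hs.elim
  rw [hm] at hs
  rcases hs with ⟨α, x', hx, H⟩ | ⟨α, y₁, hy, H⟩
  · refine ⟨BConf.dup x α x' y, x, α, x', y, rfl, Or.inl rfl, hx, ?_⟩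
    intro b' b'' h1 h2
    rw [hm]
    exact (H b' b'' h1 h2).imp
      (fun ha => ⟨⟨k, ha⟩, Nat.lt_succ_of_le (rk_le tr τ ha)⟩)
      (fun ha => ⟨⟨k, ha⟩, Nat.lt_succ_of_le (rk_le tr τ ha)⟩)
  · refine ⟨BConf.dup y α y₁ x, y, α, y₁, x, rfl, Or.inr rfl, hy, ?_⟩
    intro b' b'' h1 h2
    rw [rk_symm tr τ y x, hm]
    exact (H b' b'' h1 h2).imp
      (fun ha => ⟨⟨k, ha⟩, Nat.lt_succ_of_le (rk_le tr τ ha)⟩)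
      (fun ha => ⟨⟨k, ha⟩, Nat.lt_succ_of_le (rk_le tr τ ha)⟩)

open Classical in
/-- The positional Spoiler strategy. -/
noncomputable def strat : BConf X A → BConf X A
  | BConf.pair a b =>
      if h : ∃ c, GoodDup tr τ a b c then h.choose
      else if h2 : ∃ c, BMove tr τ (BConf.pair a b) c then h2.choose
      else BConf.pair a b
  | BConf.quint a a' b b' b'' =>
      if Ap tr τ a b' ∧ (Ap tr τ a' b'' → rk tr τ a b' ≤ rk tr τ a' b'') then
        BConf.pair a b'
      else BConf.pair a' b''
  | c => c

open Classical in
/-- The measure on configurations. -/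
noncomputable def meas : BConf X A → ℕ
  | BConf.pair a b => 3 * rk tr τ a b + 3
  | BConf.dup a _ _ b => 3 * rk tr τ a b + 2
  | BConf.quint a a' b b' b'' =>
      (if Ap tr τ a b' ∧ (Ap tr τ a' b'' → rk tr τ a b' ≤ rk tr τ a' b'') then
        3 * rk tr τ a b' else 3 * rk tr τ a' b'') + 4

/-- The invariant maintained along consistent plays. -/
def Inv : BConf X A → Prop
  | BConf.pair a b => Ap tr τ a b
  | BConf.dup a α a' b =>
      ∀ b' b'', TauStar tr τ b b' → TrOpt tr τ b' α b'' →
        (Ap tr τ a b' ∧ rk tr τ a b' < rk tr τ a b) ∨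
        (Ap tr τ a' b'' ∧ rk tr τ a' b'' < rk tr τ a b)
  | BConf.quint a a' _ b' b'' => Ap tr τ a b' ∨ Ap tr τ a' b''

theorem goodDup_move {x y : X} {c : BConf X A} (h : GoodDup tr τ x y c) :
    BMove tr τ (BConf.pair x y) c := by
  rcases h with ⟨a, α, a', b, rfl, hab | hab, ha, _⟩
  · injection hab with h1 h2
    subst h1; subst h2
    exact BMove.s1l ha
  · injection hab with h1 h2
    subst h1; subst h2
    exact BMove.s1r ha

theorem strat_valid : ValidStrat (BMove tr τ) BIsS (strat tr τ) := by
  classical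
  intro c hc hm
  match c with
  | BConf.pair a b =>
      by_cases h : ∃ c, GoodDup tr τ a b c
      · rw [strat, dif_pos h]
        exact goodDup_move tr τ h.choose_spec
      · rw [strat, dif_neg h, dif_pos hm]
        exact hm.choose_spec
  | BConf.quint a a' b b' b'' =>
      rw [strat]
      split
      · exact BMove.s2a
      · exact BMove.s2b
  | BConf.dup a α a' b => exact absurd hc (by simp [BIsS])

theorem step_lemma {c c' : BConf X A} (hI : Inv tr τ c)
    (hs : ConsStep (BMove tr τ) BIsS (strat tr τ) c c') :
    Inv tr τ c' ∧ meas tr τ c' < meas tr τ c := by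
  classical
  obtain ⟨hmove, hcons⟩ := hs
  match c with
  | BConf.pair a b =>
      have hc' : c' = strat tr τ (BConf.pair a b) := hcons trivial
      have hex : ∃ d, GoodDup tr τ a b d := exists_goodDup tr τ hI
      have hc'' : c' = hex.choose := by rw [hc', strat, dif_pos hex]
      obtain ⟨p, α, p', q, hd, hpq, hp, H⟩ := hex.choose_spec
      have heq : c' = BConf.dup p α p' q := hc''.trans hd
      subst heq
      have hrk : rk tr τ p q = rk tr τ a b := by
        rcases hpq with h | h
        · injection h with h1 h2
          subst h1; subst h2; rfl
        · injection h with h1 h2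
          subst h1; subst h2
          exact rk_symm tr τ _ _
      refine ⟨H, ?_⟩
      simp only [meas, hrk]
      omega
  | BConf.dup a α a' b =>
      cases hmove with
      | d h1 h2 =>
          rename_i b' b''
          have hkey := hI b' b'' h1 h2
          constructor
          · exact hkey.imp And.left And.left
          · simp only [meas]
            split
            · next hcond =>
                have : rk tr τ a b' < rk tr τ a b := by
                  rcases hkey with ⟨_, hlt⟩ | ⟨ha2, hlt⟩
                  · exact hlt
                  · exact lt_of_le_of_lt (hcond.2 ha2) hlt
                omega
            · next hcond =>
                have : rk tr τ a' b'' < rk tr τ a b := by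
                  rcases hkey with ⟨ha1, hlt⟩ | ⟨_, hlt⟩
                  · push_neg at hcond
                    rcases hcond ha1 with ⟨_, hlt2⟩
                    omega
                  · exact hlt
                omega
  | BConf.quint a a' b b' b'' =>
      have hc' : c' = strat tr τ (BConf.quint a a' b b' b'') := hcons trivial
      rw [hc', strat]
      simp only [meas]
      split
      · next hcond => exact ⟨hcond.1, by simp only [meas]; omega⟩
      · next hcond =>
          have : Ap tr τ a' b'' := by
            rcases hI with h | h
            · push_neg at hcond
              exact (hcond h).1
            · exact h
          exact ⟨this, by simp only [meas]; omega⟩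

theorem inv_has_move {c : BConf X A} (hI : Inv tr τ c) (hS : BIsS c) :
    ConsStep (BMove tr τ) BIsS (strat tr τ) c (strat tr τ c) := by
  classical
  refine ⟨?_, fun _ => rfl⟩
  match c with
  | BConf.pair a b =>
      have hex : ∃ d, GoodDup tr τ a b d := exists_goodDup tr τ hI
      rw [strat, dif_pos hex]
      exact goodDup_move tr τ hex.choose_spec
  | BConf.quint a a' b b' b'' =>
      rw [strat]
      split
      · exact BMove.s2a
      · exact BMove.s2b
  | BConf.dup a α a' b => exact absurd hS (by simp [BIsS])

theorem chain_last {C : Type} {R : C → C → Prop} {P : C → Prop}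
    (hP : ∀ a b, P a → R a b → P b) :
    ∀ (c : C) (l : List C), List.Chain R c l → P c →
      P ((c :: l).getLast (List.cons_ne_nil c l))
  | c, [], _, hc => hc
  | c, b :: l, hch, hc => by
      simp only [List.Chain, List.isChain_cons_cons] at hch
      have := chain_last hP b l hch.2 (hP c b hc hch.1)
      simpa [List.getLast] using this

end BApartAux

/-- If `x` and `y` are branching apart in a finite LTS, then Spoiler has a winning
strategy from `[x,y]` in the branching bisimulation game. -/
theorem branchingApart_spoiler_wins {X A : Type} [Finite X]
    (tr : X → A → X → Prop) (τ : A) (x y : X)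
    (h : BranchingApart tr τ x y) :
    (x, y) ∈ BSpoilerRegion tr τ := by
  classical
  have hA : BApartAux.Ap tr τ x y := BApartAux.ap_of_branchingApart tr τ h
  refine ⟨BApartAux.strat tr τ, BApartAux.strat_valid tr τ, ?_, ?_⟩
  · rintro f ⟨hf0, hfs⟩
    have hinv : ∀ i, BApartAux.Inv tr τ (f i) := by
      intro i
      induction i with
      | zero => rw [hf0]; exact hA
      | succ n ih => exact (BApartAux.step_lemma tr τ ih (hfs n)).1
    have hdec : ∀ i, BApartAux.meas tr τ (f (i + 1)) < BApartAux.meas tr τ (f i) :=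
      fun i => (BApartAux.step_lemma tr τ (hinv i) (hfs i)).2
    have hb : ∀ n, BApartAux.meas tr τ (f n) + n ≤ BApartAux.meas tr τ (f 0) := by
      intro n
      induction n with
      | zero => omega
      | succ n ih => have := hdec n; omega
    have := hb (BApartAux.meas tr τ (f 0) + 1)
    omega
  · rintro l ⟨hch, hstuck⟩
    have hlast := BApartAux.chain_last
      (R := ConsStep (BMove tr τ) BIsS (BApartAux.strat tr τ))
      (P := BApartAux.Inv tr τ)
      (fun a b ha hr => (BApartAux.step_lemma tr τ ha hr).1)
      (BConf.pair x y) l hch hA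
    intro hS
    exact hstuck _ (BApartAux.inv_has_move tr τ hlast hS)
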